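/- Let C be a nodal curve with marked smooth point σ(0), and fix irreducible components C_γ, C_{γ'}. If Z is a 3-tail of C with C_γ ∪ C_{γ'} ⊆ Z and σ(0) ∈ Z^c, then there exists a Z-terminal tail W (i.e., Term_W ∩ Term_Z ≠ ∅) such that either W belongs to the nested set T²_{γ,γ'} of 2-tails, or W belongs to the nested set T³_{γ,γ'} of 3-tails and W ⊆ Z. -/

import Mathlib

open Finset

/-- A combinatorial model of a nodal curve: `V` is the set of irreducible
components, `N` the set of nodes, `ends e` the (one or two) components through
the node `e`, `gen v` the geometric genus of the component `v`, and `base` the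
component containing the marked smooth point `σ(0)`. -/
structure NodalGraph where
  V : Type
  N : Type
  [fV : Fintype V]
  [dV : DecidableEq V]
  [fN : Fintype N]
  [dN : DecidableEq N]
  ends : N → V × V
  gen : V → ℕ
  base : V

attribute [instance] NodalGraph.fV NodalGraph.dV NodalGraph.fN NodalGraph.dN

namespace NodalGraph

variable (G : NodalGraph)

/-- Two components are adjacent if some node lies on both. -/
def Adj (a b : G.V) : Prop := ∃ e, G.ends e = (a, b) ∨ G.ends e = (b, a)

/-- The set of terminal points of a subcurve `Z`, i.e. the nodes in `Z ∩ Zᶜ`. -/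
def Term (Z : Finset G.V) : Finset G.N :=
  univ.filter (fun e =>
    ((G.ends e).1 ∈ Z ∧ (G.ends e).2 ∉ Z) ∨ ((G.ends e).1 ∉ Z ∧ (G.ends e).2 ∈ Z))

/-- `k_Z`, the number of terminal points of `Z`. -/
def k (Z : Finset G.V) : ℕ := (G.Term Z).card

/-- A (nonempty) subcurve is connected. -/
def ConnSub (Z : Finset G.V) : Prop :=
  Z.Nonempty ∧ ∀ u ∈ Z, ∀ v ∈ Z,
    Relation.ReflTransGen (fun a b => a ∈ Z ∧ b ∈ Z ∧ G.Adj a b) u v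

/-- The whole curve is connected. -/
def Connected : Prop := G.ConnSub univ

/-- A tail: a proper subcurve `Z` with both `Z` and `Zᶜ` connected. -/
def IsTail (Z : Finset G.V) : Prop := Z ≠ univ ∧ G.ConnSub Z ∧ G.ConnSub Zᶜ

/-- A `m`-tail: a tail with `k_Z = m`. -/
def IsKTail (Z : Finset G.V) (m : ℕ) : Prop := G.IsTail Z ∧ G.k Z = m

/-- The node `e` lies on the component `v`. -/
def onComp (e : G.N) (v : G.V) : Prop := (G.ends e).1 = v ∨ (G.ends e).2 = v

/-- The node `e`, as a point of the curve, lies on the subcurve `Z`. -/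
def nodeOn (e : G.N) (Z : Finset G.V) : Prop := (G.ends e).1 ∈ Z ∨ (G.ends e).2 ∈ Z

/-- The subcurve `Z` crosses the node `e`: both branches of `e` lie in `Z`. -/
def crosses (Z : Finset G.V) (e : G.N) : Prop := (G.ends e).1 ∈ Z ∧ (G.ends e).2 ∈ Z

/-- `Z ≺ Z'`: strict inclusion with disjoint terminal points. -/
def prec (Z Z' : Finset G.V) : Prop := Z ⊂ Z' ∧ G.Term Z ∩ G.Term Z' = ∅

/-- The pair `(Z, Z')` is free: disjoint terminal points. -/
def free (Z Z' : Finset G.V) : Prop := G.Term Z ∩ G.Term Z' = ∅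

/-- The pair `(Z, Z')` is perfect. -/
def perfect (Z Z' : Finset G.V) : Prop := Z ⊆ Z' ∨ Z' ⊆ Z ∨ Zᶜ ⊆ Z' ∨ Z' ⊆ Zᶜ

/-- `T¹_γ`: the nested set of 1-tails containing `C_γ` and avoiding `σ(0)`. -/
def T1 (γ : G.V) : Set (Finset G.V) := { Z | G.IsKTail Z 1 ∧ γ ∈ Z ∧ G.base ∉ Z }

/-- The defining condition for the 2-tails entering `T²_{γ,γ'}`. -/
def cond2 (γ γ' : G.V) (Z : Finset G.V) : Prop :=
  G.IsKTail Z 2 ∧ γ ∈ Z ∧ γ' ∈ Z ∧ G.base ∉ Z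

/-- `W 0 ≺ W 1 ≺ ⋯ ≺ W (M-1)` is the nested set `T²_{γ,γ'}` of 2-tails:
each `W t` is minimal among the 2-tails `Z ⊇ C_γ ∪ C_γ'` with `σ(0) ∈ Zᶜ`
and `W (t-1) ≺ Z` (starting from `W_{-1} = ∅`), and the chain is maximal. -/
def IsNested2 (γ γ' : G.V) (M : ℕ) (W : ℕ → Finset G.V) : Prop :=
  (∀ t < M, Minimal (fun Z => G.cond2 γ γ' Z ∧ G.prec (if t = 0 then ∅ else W (t - 1)) Z) (W t)) ∧
  ¬ ∃ Z, G.cond2 γ γ' Z ∧ G.prec (if M = 0 then ∅ else W (M - 1)) Z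

/-- The set underlying a finite chain `W 0, …, W (M-1)`. -/
def chainSet (M : ℕ) (W : ℕ → Finset G.V) : Set (Finset G.V) := { Z | ∃ t < M, W t = Z }

/-- The defining condition for the 3-tails entering `T³_{γ,γ'}`:
3-tails that are moreover free with respect to every member of `T²_{γ,γ'}`. -/
def cond3 (γ γ' : G.V) (T2 : Set (Finset G.V)) (Z : Finset G.V) : Prop :=
  G.IsKTail Z 3 ∧ γ ∈ Z ∧ γ' ∈ Z ∧ G.base ∉ Z ∧ ∀ W ∈ T2, G.free Z W

/-- `W 0 ≺ ⋯ ≺ W (M-1)` is the nested set `T³_{γ,γ'}` of 3-tails (relative to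
the set `T2` of nested 2-tails). -/
def IsNested3 (γ γ' : G.V) (T2 : Set (Finset G.V)) (M : ℕ) (W : ℕ → Finset G.V) : Prop :=
  (∀ t < M, Minimal (fun Z => G.cond3 γ γ' T2 Z ∧ G.prec (if t = 0 then ∅ else W (t - 1)) Z) (W t)) ∧
  ¬ ∃ Z, G.cond3 γ γ' T2 Z ∧ G.prec (if M = 0 then ∅ else W (M - 1)) Z

end NodalGraph

namespace NodalGraph

variable {G : NodalGraph}

lemma Adj.symm' {a b : G.V} (h : G.Adj a b) : G.Adj b a := by
  obtain ⟨e, h | h⟩ := h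
  · exact ⟨e, Or.inr h⟩
  · exact ⟨e, Or.inl h⟩

private lemma rtg_mono {S T : Finset G.V} (hST : S ⊆ T) {u v : G.V}
    (h : Relation.ReflTransGen (fun a b => a ∈ S ∧ b ∈ S ∧ G.Adj a b) u v) :
    Relation.ReflTransGen (fun a b => a ∈ T ∧ b ∈ T ∧ G.Adj a b) u v :=
  Relation.ReflTransGen.mono (fun a b (h : a ∈ S ∧ b ∈ S ∧ G.Adj a b) =>
    (⟨hST h.1, hST h.2.1, h.2.2⟩ : a ∈ T ∧ b ∈ T ∧ G.Adj a b)) u v h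

private lemma rtg_symm {S : Finset G.V} {u v : G.V}
    (h : Relation.ReflTransGen (fun a b => a ∈ S ∧ b ∈ S ∧ G.Adj a b) u v) :
    Relation.ReflTransGen (fun a b => a ∈ S ∧ b ∈ S ∧ G.Adj a b) v u := by
  induction h with
  | refl => exact .refl
  | tail _ h₂ ih => exact Relation.ReflTransGen.head ⟨h₂.2.1, h₂.1, h₂.2.2.symm'⟩ ih

lemma connSub_union {X Y : Finset G.V} (hX : G.ConnSub X) (hY : G.ConnSub Y)
    {w : G.V} (hwX : w ∈ X) (hwY : w ∈ Y) : G.ConnSub (X ∪ Y) := by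
  refine ⟨⟨w, mem_union_left _ hwX⟩, ?_⟩
  have key : ∀ u ∈ X ∪ Y,
      Relation.ReflTransGen (fun a b => a ∈ X ∪ Y ∧ b ∈ X ∪ Y ∧ G.Adj a b) u w := by
    intro u hu
    rcases mem_union.mp hu with h | h
    · exact rtg_mono subset_union_left (hX.2 u h w hwX)
    · exact rtg_mono subset_union_right (hY.2 u h w hwY)
  intro u hu v hv
  exact (key u hu).trans (rtg_symm (key v hv))

lemma exists_cross {A X : Finset G.V} (hA : G.ConnSub A) {u v : G.V}
    (hu : u ∈ X) (huA : u ∈ A) (hv : v ∈ A) (hvX : v ∉ X) :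
    ∃ e, ((G.ends e).1 ∈ X ∧ (G.ends e).2 ∈ A ∧ (G.ends e).2 ∉ X) ∨
         ((G.ends e).2 ∈ X ∧ (G.ends e).1 ∈ A ∧ (G.ends e).1 ∉ X) := by
  suffices H : ∀ w, Relation.ReflTransGen (fun a b => a ∈ A ∧ b ∈ A ∧ G.Adj a b) u w →
      w ∉ X →
      ∃ e, ((G.ends e).1 ∈ X ∧ (G.ends e).2 ∈ A ∧ (G.ends e).2 ∉ X) ∨
         ((G.ends e).2 ∈ X ∧ (G.ends e).1 ∈ A ∧ (G.ends e).1 ∉ X) by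
    exact H v (hA.2 u huA v hv) hvX
  intro w hw
  induction hw with
  | refl => exact fun h => absurd hu h
  | @tail b c _ h₂ ih =>
      intro hc
      by_cases hb : b ∈ X
      · obtain ⟨e, he | he⟩ := h₂.2.2
        · have e1 : (G.ends e).1 = b := by rw [he]
          have e2 : (G.ends e).2 = c := by rw [he]
          exact ⟨e, Or.inl ⟨by rw [e1]; exact hb, by rw [e2]; exact h₂.2.1,
            by rw [e2]; exact hc⟩⟩
        · have e1 : (G.ends e).1 = c := by rw [he]
          have e2 : (G.ends e).2 = b := by rw [he]
          exact ⟨e, Or.inr ⟨by rw [e2]; exact hb, by rw [e1]; exact h₂.2.1,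
            by rw [e1]; exact hc⟩⟩
      · exact ih hb

private lemma cross_pin {A X : Finset G.V} {x y : G.V}
    (huniq : ∀ e, ((G.ends e).1 ∈ X ∧ (G.ends e).2 ∈ A ∧ (G.ends e).2 ∉ X) ∨
        ((G.ends e).2 ∈ X ∧ (G.ends e).1 ∈ A ∧ (G.ends e).1 ∉ X) →
        G.ends e = (x, y) ∨ G.ends e = (y, x))
    (hx : x ∈ X) {b c : G.V} (hAdj : G.Adj b c)
    (hcA : c ∈ A) (hbX : b ∈ X) (hcX : c ∉ X) : b = x := by
  obtain ⟨e, he | he⟩ := hAdj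
  · rcases huniq e (Or.inl ⟨by rw [he]; exact hbX, by rw [he]; exact hcA,
        by rw [he]; exact hcX⟩) with h | h
    · exact (Prod.ext_iff.mp (he.symm.trans h)).1
    · have hcx := (Prod.ext_iff.mp (he.symm.trans h)).2
      simp only [] at hcx
      exact absurd (by rw [hcx]; exact hx : c ∈ X) hcX
  · rcases huniq e (Or.inr ⟨by rw [he]; exact hbX, by rw [he]; exact hcA,
        by rw [he]; exact hcX⟩) with h | h
    · have hcx := (Prod.ext_iff.mp (he.symm.trans h)).1
      simp only [] at hcx
      exact absurd (by rw [hcx]; exact hx : c ∈ X) hcX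
    · exact (Prod.ext_iff.mp (he.symm.trans h)).2

lemma connSub_of_unique_cross {A X : Finset G.V} (hA : G.ConnSub A) (hXA : X ⊆ A)
    (hne : X.Nonempty) {x y : G.V} (hx : x ∈ X)
    (huniq : ∀ e, ((G.ends e).1 ∈ X ∧ (G.ends e).2 ∈ A ∧ (G.ends e).2 ∉ X) ∨
        ((G.ends e).2 ∈ X ∧ (G.ends e).1 ∈ A ∧ (G.ends e).1 ∉ X) →
        G.ends e = (x, y) ∨ G.ends e = (y, x)) :
    G.ConnSub X := by
  refine ⟨hne, ?_⟩
  intro u hu v hv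
  suffices H : ∀ w, Relation.ReflTransGen (fun a b => a ∈ A ∧ b ∈ A ∧ G.Adj a b) u w →
      ((w ∈ X → Relation.ReflTransGen (fun a b => a ∈ X ∧ b ∈ X ∧ G.Adj a b) u w) ∧
       (w ∉ X → Relation.ReflTransGen (fun a b => a ∈ X ∧ b ∈ X ∧ G.Adj a b) u x)) by
    exact (H v (hA.2 u (hXA hu) v (hXA hv))).1 hv
  intro w hw
  induction hw with
  | refl => exact ⟨fun _ => .refl, fun h => absurd hu h⟩
  | @tail b c _ h₂ ih =>
      constructor
      · intro hcX
        by_cases hbX : b ∈ X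
        · exact (ih.1 hbX).tail ⟨hbX, hcX, h₂.2.2⟩
        · have hcx : c = x := cross_pin huniq hx h₂.2.2.symm' h₂.1 hcX hbX
          rw [hcx]; exact ih.2 hbX
      · intro hcX
        by_cases hbX : b ∈ X
        · have hbx : b = x := cross_pin huniq hx h₂.2.2 h₂.2.1 hbX hcX
          rw [← hbx]; exact ih.1 hbX
        · exact ih.2 hbX

lemma term_empty : G.Term (∅ : Finset G.V) = ∅ := by
  ext e; simp [Term]

end NodalGraph

namespace NodalGraph

/-- Nodes joining `W ∩ Y` to `W \ Y`: both ends in `W`, crossing `Y`. -/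
def cA (G : NodalGraph) (W Y : Finset G.V) : Finset G.N :=
  univ.filter (fun e => ((G.ends e).1 ∈ W ∧ (G.ends e).2 ∈ W) ∧
    (((G.ends e).1 ∈ Y ∧ (G.ends e).2 ∉ Y) ∨ ((G.ends e).1 ∉ Y ∧ (G.ends e).2 ∈ Y)))

/-- Nodes joining `W ∩ Y` to `(W ∪ Y)ᶜ`. -/
def cC (G : NodalGraph) (W Y : Finset G.V) : Finset G.N :=
  univ.filter (fun e =>
    (((G.ends e).1 ∈ W ∧ (G.ends e).2 ∉ W) ∨ ((G.ends e).1 ∉ W ∧ (G.ends e).2 ∈ W)) ∧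
    (((G.ends e).1 ∈ Y ∧ (G.ends e).2 ∉ Y) ∨ ((G.ends e).1 ∉ Y ∧ (G.ends e).2 ∈ Y)) ∧
    ((G.ends e).1 ∈ W ↔ (G.ends e).1 ∈ Y))

/-- Nodes joining `W \ Y` to `Y \ W`. -/
def cD (G : NodalGraph) (W Y : Finset G.V) : Finset G.N :=
  univ.filter (fun e =>
    (((G.ends e).1 ∈ W ∧ (G.ends e).2 ∉ W) ∨ ((G.ends e).1 ∉ W ∧ (G.ends e).2 ∈ W)) ∧
    (((G.ends e).1 ∈ Y ∧ (G.ends e).2 ∉ Y) ∨ ((G.ends e).1 ∉ Y ∧ (G.ends e).2 ∈ Y)) ∧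
    ¬((G.ends e).1 ∈ W ↔ (G.ends e).1 ∈ Y))

variable {G : NodalGraph}

lemma cA_subset_term (W Y : Finset G.V) : cA G W Y ⊆ G.Term Y := by
  intro e he
  simp only [cA, Term, mem_filter, mem_univ, true_and] at *
  tauto

lemma cC_subset_termW (W Y : Finset G.V) : cC G W Y ⊆ G.Term W := by
  intro e he
  simp only [cC, Term, mem_filter, mem_univ, true_and] at *
  tauto

lemma cC_subset_termY (W Y : Finset G.V) : cC G W Y ⊆ G.Term Y := by
  intro e he
  simp only [cC, Term, mem_filter, mem_univ, true_and] at *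
  tauto

lemma cA_compl_right (W Y : Finset G.V) : cA G W Yᶜ = cA G W Y := by
  ext e
  simp only [cA, mem_filter, mem_univ, true_and, mem_compl]
  tauto

set_option maxHeartbeats 1000000 in
lemma term_W_eq (W Y : Finset G.V) :
    G.Term W = cA G Y W ∪ cC G W Y ∪ cD G W Y ∪ cA G Yᶜ W := by
  ext e
  simp only [Term, cA, cC, cD, mem_filter, mem_univ, true_and, mem_union, mem_compl]
  tauto

set_option maxHeartbeats 1000000 in
lemma term_Y_eq (W Y : Finset G.V) :
    G.Term Y = cA G W Y ∪ cC G W Y ∪ cD G W Y ∪ cA G Wᶜ Y := by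
  ext e
  simp only [Term, cA, cC, cD, mem_filter, mem_univ, true_and, mem_union, mem_compl]
  tauto

set_option maxHeartbeats 1000000 in
lemma term_inter_eq (W Y : Finset G.V) :
    G.Term (W ∩ Y) = cA G W Y ∪ cA G Y W ∪ cC G W Y := by
  ext e
  simp only [Term, cA, cC, mem_filter, mem_univ, true_and, mem_union, mem_inter]
  tauto

set_option maxHeartbeats 1000000 in
lemma term_union_eq (W Y : Finset G.V) :
    G.Term (W ∪ Y) = cC G W Y ∪ cA G Yᶜ W ∪ cA G Wᶜ Y := by
  ext e
  simp only [Term, cA, cC, mem_filter, mem_univ, true_and, mem_union, mem_compl]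
  tauto

private lemma card_u3 {α : Type*} [DecidableEq α] {s t u : Finset α}
    (h1 : Disjoint s t) (h2 : Disjoint s u) (h3 : Disjoint t u) :
    (s ∪ t ∪ u).card = s.card + t.card + u.card := by
  rw [card_union_of_disjoint (by rw [disjoint_union_left]; exact ⟨h2, h3⟩),
    card_union_of_disjoint h1]

private lemma card_u4 {α : Type*} [DecidableEq α] {s t u v : Finset α}
    (h1 : Disjoint s t) (h2 : Disjoint s u) (h3 : Disjoint s v)
    (h4 : Disjoint t u) (h5 : Disjoint t v) (h6 : Disjoint u v) :
    (s ∪ t ∪ u ∪ v).card = s.card + t.card + u.card + v.card := by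
  rw [card_union_of_disjoint
      (by rw [disjoint_union_left, disjoint_union_left]; exact ⟨⟨h3, h5⟩, h6⟩),
    card_u3 h1 h2 h4]

lemma quad_cards (W Y : Finset G.V) :
    G.k W = (cA G Y W).card + (cC G W Y).card + (cD G W Y).card + (cA G Yᶜ W).card ∧
    G.k Y = (cA G W Y).card + (cC G W Y).card + (cD G W Y).card + (cA G Wᶜ Y).card ∧
    G.k (W ∩ Y) = (cA G W Y).card + (cA G Y W).card + (cC G W Y).card ∧
    G.k (W ∪ Y) = (cC G W Y).card + (cA G Yᶜ W).card + (cA G Wᶜ Y).card := by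
  have dAB : Disjoint (cA G W Y) (cA G Y W) := by
    rw [disjoint_left]; intro e h1 h2
    simp only [cA, mem_filter, mem_univ, true_and] at h1 h2; tauto
  have dAC : Disjoint (cA G W Y) (cC G W Y) := by
    rw [disjoint_left]; intro e h1 h2
    simp only [cA, cC, mem_filter, mem_univ, true_and] at h1 h2; tauto
  have dAD : Disjoint (cA G W Y) (cD G W Y) := by
    rw [disjoint_left]; intro e h1 h2
    simp only [cA, cD, mem_filter, mem_univ, true_and] at h1 h2; tauto
  have dAG : Disjoint (cA G W Y) (cA G Wᶜ Y) := by
    rw [disjoint_left]; intro e h1 h2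
    simp only [cA, mem_filter, mem_univ, true_and, mem_compl] at h1 h2; tauto
  have dBC : Disjoint (cA G Y W) (cC G W Y) := by
    rw [disjoint_left]; intro e h1 h2
    simp only [cA, cC, mem_filter, mem_univ, true_and] at h1 h2; tauto
  have dBD : Disjoint (cA G Y W) (cD G W Y) := by
    rw [disjoint_left]; intro e h1 h2
    simp only [cA, cD, mem_filter, mem_univ, true_and] at h1 h2; tauto
  have dBF : Disjoint (cA G Y W) (cA G Yᶜ W) := by
    rw [disjoint_left]; intro e h1 h2
    simp only [cA, mem_filter, mem_univ, true_and, mem_compl] at h1 h2; tauto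
  have dCD : Disjoint (cC G W Y) (cD G W Y) := by
    rw [disjoint_left]; intro e h1 h2
    simp only [cC, cD, mem_filter, mem_univ, true_and] at h1 h2; tauto
  have dCF : Disjoint (cC G W Y) (cA G Yᶜ W) := by
    rw [disjoint_left]; intro e h1 h2
    simp only [cA, cC, mem_filter, mem_univ, true_and, mem_compl] at h1 h2; tauto
  have dCG : Disjoint (cC G W Y) (cA G Wᶜ Y) := by
    rw [disjoint_left]; intro e h1 h2
    simp only [cA, cC, mem_filter, mem_univ, true_and, mem_compl] at h1 h2; tauto
  have dDF : Disjoint (cD G W Y) (cA G Yᶜ W) := by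
    rw [disjoint_left]; intro e h1 h2
    simp only [cA, cD, mem_filter, mem_univ, true_and, mem_compl] at h1 h2; tauto
  have dDG : Disjoint (cD G W Y) (cA G Wᶜ Y) := by
    rw [disjoint_left]; intro e h1 h2
    simp only [cA, cD, mem_filter, mem_univ, true_and, mem_compl] at h1 h2; tauto
  have dFG : Disjoint (cA G Yᶜ W) (cA G Wᶜ Y) := by
    rw [disjoint_left]; intro e h1 h2
    simp only [cA, mem_filter, mem_univ, true_and, mem_compl] at h1 h2; tauto
  refine ⟨?_, ?_, ?_, ?_⟩
  · rw [k, term_W_eq W Y, card_u4 dBC dBD dBF dCD dCF dDF]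
  · rw [k, term_Y_eq W Y, card_u4 dAC dAD dAG dCD dCG dDG]
  · rw [k, term_inter_eq W Y, card_u3 dAB dAC dBC]
  · rw [k, term_union_eq W Y, card_u3 dCF dCG dFG]

lemma cA_nonempty_of {W Y : Finset G.V} (hWc : G.ConnSub W) {u v : G.V}
    (hu1 : u ∈ W) (hu2 : u ∈ Y) (hv1 : v ∈ W) (hv2 : v ∉ Y) :
    (cA G W Y).Nonempty := by
  obtain ⟨e, he⟩ := exists_cross (X := W ∩ Y) hWc (mem_inter.mpr ⟨hu1, hu2⟩) hu1 hv1
    (by simp [hv2])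
  refine ⟨e, ?_⟩
  simp only [cA, mem_filter, mem_univ, true_and]
  simp only [mem_inter, not_and] at he
  tauto

lemma term_inter_subset (W Y : Finset G.V) :
    G.Term (W ∩ Y) ⊆ G.Term W ∪ G.Term Y := by
  rw [term_inter_eq]
  intro e he
  rcases mem_union.mp he with h | h
  · rcases mem_union.mp h with h | h
    · exact mem_union_right _ (cA_subset_term W Y h)
    · exact mem_union_left _ (cA_subset_term Y W h)
  · exact mem_union_left _ (cC_subset_termW W Y h)

lemma term_union_subset (W Y : Finset G.V) :
    G.Term (W ∪ Y) ⊆ G.Term W ∪ G.Term Y := by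
  rw [term_union_eq]
  intro e he
  rcases mem_union.mp he with h | h
  · rcases mem_union.mp h with h | h
    · exact mem_union_left _ (cC_subset_termW W Y h)
    · exact mem_union_left _ (cA_subset_term Yᶜ W h)
  · exact mem_union_right _ (cA_subset_term Wᶜ Y h)

lemma connSub_inter {W Y : Finset G.V} (hW : G.ConnSub W) (hne : (W ∩ Y).Nonempty)
    (hcard : (cA G W Y).card ≤ 1) : G.ConnSub (W ∩ Y) := by
  have bridge : ∀ e, ((G.ends e).1 ∈ W ∩ Y ∧ (G.ends e).2 ∈ W ∧ (G.ends e).2 ∉ W ∩ Y) ∨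
      ((G.ends e).2 ∈ W ∩ Y ∧ (G.ends e).1 ∈ W ∧ (G.ends e).1 ∉ W ∩ Y) →
      e ∈ cA G W Y := by
    intro e he
    simp only [cA, mem_filter, mem_univ, true_and]
    simp only [mem_inter, not_and] at he
    tauto
  obtain ⟨u, hu⟩ := hne
  rcases Nat.eq_zero_or_pos (cA G W Y).card with h0 | h1
  · refine connSub_of_unique_cross (x := u) (y := u) hW inter_subset_left ⟨u, hu⟩ hu ?_
    intro e he
    exact absurd (bridge e he) (by simp [card_eq_zero.mp h0])
  · obtain ⟨e₀, he₀⟩ := card_eq_one.mp (le_antisymm hcard h1)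
    have he₀m : e₀ ∈ cA G W Y := by rw [he₀]; exact mem_singleton_self e₀
    simp only [cA, mem_filter, mem_univ, true_and] at he₀m
    obtain ⟨⟨hw1, hw2⟩, hcr⟩ := he₀m
    rcases hcr with ⟨hy1, hy2⟩ | ⟨hy1, hy2⟩
    · refine connSub_of_unique_cross (x := (G.ends e₀).1) (y := (G.ends e₀).2) hW
        inter_subset_left ⟨u, hu⟩ (mem_inter.mpr ⟨hw1, hy1⟩) ?_
      intro e he
      have : e = e₀ := by have := bridge e he; rw [he₀] at this; exact mem_singleton.mp this
      rw [this]
      exact Or.inl rfl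
    · refine connSub_of_unique_cross (x := (G.ends e₀).2) (y := (G.ends e₀).1) hW
        inter_subset_left ⟨u, hu⟩ (mem_inter.mpr ⟨hw2, hy2⟩) ?_
      intro e he
      have : e = e₀ := by have := bridge e he; rw [he₀] at this; exact mem_singleton.mp this
      rw [this]
      exact Or.inr rfl

end NodalGraph

namespace NodalGraph

variable {G : NodalGraph}

lemma master2 {γ0 γ1 : G.V} {P0 W Y : Finset G.V}
    (hW : Minimal (fun Z => G.cond2 γ0 γ1 Z ∧ G.prec P0 Z) W)
    (hY : G.cond2 γ0 γ1 Y) (hYp : G.prec P0 Y) : W ⊆ Y ∨ Y ⊆ W := by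
  by_contra hcon
  push_neg at hcon
  obtain ⟨hWY, hYW⟩ := hcon
  obtain ⟨p2, hp2W, hp2Y⟩ := not_subset.mp hWY
  obtain ⟨p3, hp3Y, hp3W⟩ := not_subset.mp hYW
  obtain ⟨⟨⟨hWuniv, hWconn, hWcconn⟩, hkW⟩, hγ0W, hγ1W, hbW⟩ := hW.1.1
  obtain ⟨hWss, hWfree⟩ := hW.1.2
  obtain ⟨⟨⟨hYuniv, hYconn, hYcconn⟩, hkY⟩, hγ0Y, hγ1Y, hbY⟩ := hY
  obtain ⟨hYss, hYfree⟩ := hYp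
  obtain ⟨c1, c2, c3, c4⟩ := quad_cards (G := G) W Y
  have hA := (cA_nonempty_of hWconn hγ0W hγ0Y hp2W hp2Y).card_pos
  have hB := (cA_nonempty_of hYconn hγ0Y hγ0W hp3Y hp3W).card_pos
  have hF := (cA_nonempty_of hYcconn (mem_compl.mpr hp2Y) hp2W
    (mem_compl.mpr hbY) hbW).card_pos
  have hGc := (cA_nonempty_of hWcconn (mem_compl.mpr hp3W) hp3Y
    (mem_compl.mpr hbW) hbY).card_pos
  rw [hkW] at c1; rw [hkY] at c2
  have hnA : (cA G W Y).card = 1 := by omega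
  have hnB : (cA G Y W).card = 1 := by omega
  have hkP1 : G.k (W ∩ Y) = 2 := by omega
  -- W ∩ Y is a 2-tail
  have hP1conn : G.ConnSub (W ∩ Y) :=
    connSub_inter hWconn ⟨γ0, mem_inter.mpr ⟨hγ0W, hγ0Y⟩⟩ (by omega)
  have hP1cconn : G.ConnSub (W ∩ Y)ᶜ := by
    rw [compl_inter]
    exact connSub_union hWcconn hYcconn (mem_compl.mpr hbW) (mem_compl.mpr hbY)
  have hbP1 : G.base ∉ W ∩ Y := fun h => hbW (mem_inter.mp h).1
  have hc2P1 : G.cond2 γ0 γ1 (W ∩ Y) :=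
    ⟨⟨⟨fun h => hbP1 (h ▸ mem_univ _), hP1conn, hP1cconn⟩, hkP1⟩,
      mem_inter.mpr ⟨hγ0W, hγ0Y⟩, mem_inter.mpr ⟨hγ1W, hγ1Y⟩, hbP1⟩
  have htsub : ∀ e ∈ G.Term (W ∩ Y), e ∈ G.Term W ∨ e ∈ G.Term Y := by
    intro e he
    exact mem_union.mp (term_inter_subset W Y he)
  have hprecP1 : G.prec P0 (W ∩ Y) := by
    constructor
    · refine lt_of_le_of_ne (subset_inter hWss.subset hYss.subset) ?_
      intro h
      obtain ⟨e, he⟩ := card_pos.mp hB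
      have heW : e ∈ G.Term W := cA_subset_term Y W he
      have heP1 : e ∈ G.Term (W ∩ Y) := by
        rw [term_inter_eq]
        exact mem_union_left _ (mem_union_right _ he)
      rw [← h] at heP1
      exact (eq_empty_iff_forall_notMem.mp hWfree e) (mem_inter.mpr ⟨heP1, heW⟩)
    · rw [eq_empty_iff_forall_notMem]
      intro e he
      obtain ⟨he0, he1⟩ := mem_inter.mp he
      rcases htsub e he1 with h | h
      · exact (eq_empty_iff_forall_notMem.mp hWfree e) (mem_inter.mpr ⟨he0, h⟩)
      · exact (eq_empty_iff_forall_notMem.mp hYfree e) (mem_inter.mpr ⟨he0, h⟩)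
  have hle : W ⊆ W ∩ Y := hW.2 ⟨hc2P1, hprecP1⟩ inter_subset_left
  exact hp2Y (mem_inter.mp (hle hp2W)).2

lemma chain_absurd {γ0 γ1 : G.V} {M2 : ℕ} {W2 : ℕ → Finset G.V}
    (h2 : G.IsNested2 γ0 γ1 M2 W2) {Y : Finset G.V} (hY : G.cond2 γ0 γ1 Y)
    (hfree : ∀ s, s < M2 → G.Term (W2 s) ∩ G.Term Y = ∅)
    (hne : ∀ s, s < M2 → W2 s ≠ Y) : False := by
  have key : ∀ s, s ≤ M2 → G.prec (if s = 0 then ∅ else W2 (s - 1)) Y := by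
    intro s
    induction s with
    | zero =>
        intro _
        refine ⟨?_, ?_⟩
        · simpa using empty_ssubset.mpr hY.1.1.2.1.1
        · simp [term_empty]
    | succ s ih =>
        intro hs1
        have hs : s < M2 := by omega
        have hprev := ih (by omega)
        have hmin := h2.1 s hs
        rcases master2 hmin hY hprev with h | h
        · have hss : G.prec (W2 s) Y :=
            ⟨lt_of_le_of_ne h (hne s hs), hfree s hs⟩
          simpa only [Nat.succ_ne_zero, if_false, Nat.add_sub_cancel] using hss
        · have hle : W2 s ⊆ Y := hmin.2 ⟨hY, hprev⟩ h
          exact absurd (subset_antisymm hle h) (hne s hs)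
  exact h2.2 ⟨Y, hY, key M2 le_rfl⟩

set_option maxHeartbeats 1000000 in
lemma master3 {γ0 γ1 : G.V} {M2 : ℕ} {W2 : ℕ → Finset G.V}
    (h2 : G.IsNested2 γ0 γ1 M2 W2) {P0 W Y : Finset G.V}
    (hW : Minimal (fun Z => G.cond3 γ0 γ1 (G.chainSet M2 W2) Z ∧ G.prec P0 Z) W)
    (hY : G.cond3 γ0 γ1 (G.chainSet M2 W2) Y) (hYp : G.prec P0 Y) :
    W ⊆ Y ∨ Y ⊆ W := by
  by_contra hcon
  push_neg at hcon
  obtain ⟨hWY, hYW⟩ := hcon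
  obtain ⟨p2, hp2W, hp2Y⟩ := not_subset.mp hWY
  obtain ⟨p3, hp3Y, hp3W⟩ := not_subset.mp hYW
  obtain ⟨⟨⟨hWuniv, hWconn, hWcconn⟩, hkW⟩, hγ0W, hγ1W, hbW, hWT2⟩ := hW.1.1
  obtain ⟨hWss, hWfree⟩ := hW.1.2
  obtain ⟨⟨⟨hYuniv, hYconn, hYcconn⟩, hkY⟩, hγ0Y, hγ1Y, hbY, hYT2⟩ := hY
  obtain ⟨hYss, hYfree⟩ := hYp
  obtain ⟨c1, c2, c3, c4⟩ := quad_cards (G := G) W Y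
  have hA := (cA_nonempty_of hWconn hγ0W hγ0Y hp2W hp2Y).card_pos
  have hB := (cA_nonempty_of hYconn hγ0Y hγ0W hp3Y hp3W).card_pos
  have hF := (cA_nonempty_of hYcconn (mem_compl.mpr hp2Y) hp2W
    (mem_compl.mpr hbY) hbW).card_pos
  have hGc := (cA_nonempty_of hWcconn (mem_compl.mpr hp3W) hp3Y
    (mem_compl.mpr hbW) hbY).card_pos
  rw [hkW] at c1; rw [hkY] at c2
  -- common facts about W ∩ Y
  have hbP1 : G.base ∉ W ∩ Y := fun h => hbW (mem_inter.mp h).1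
  have hP1cconn : G.ConnSub (W ∩ Y)ᶜ := by
    rw [compl_inter]
    exact connSub_union hWcconn hYcconn (mem_compl.mpr hbW) (mem_compl.mpr hbY)
  have htsub : ∀ e ∈ G.Term (W ∩ Y), e ∈ G.Term W ∨ e ∈ G.Term Y := by
    intro e he
    exact mem_union.mp (term_inter_subset W Y he)
  have hT2W : ∀ s, s < M2 → G.Term W ∩ G.Term (W2 s) = ∅ := by
    intro s hs
    exact hWT2 (W2 s) ⟨s, hs, rfl⟩
  have hT2Y : ∀ s, s < M2 → G.Term Y ∩ G.Term (W2 s) = ∅ := by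
    intro s hs
    exact hYT2 (W2 s) ⟨s, hs, rfl⟩
  have hcase : ((cA G W Y).card + (cA G Y W).card + (cC G W Y).card = 3 ∧
      ((cA G W Y).card = 1 ∨ (cA G Y W).card = 1)) ∨
      ((cA G W Y).card = 1 ∧ (cA G Y W).card = 1 ∧ (cC G W Y).card = 0) ∨
      ((cC G W Y).card = 0 ∧ (cA G Yᶜ W).card = 1 ∧ (cA G Wᶜ Y).card = 1) := by
    omega
  have hP1prec : G.prec P0 (W ∩ Y) := by
    constructor
    · refine lt_of_le_of_ne (subset_inter hWss.subset hYss.subset) ?_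
      intro h
      obtain ⟨e, he⟩ := card_pos.mp hB
      have heW : e ∈ G.Term W := cA_subset_term Y W he
      have heP1 : e ∈ G.Term (W ∩ Y) := by
        rw [term_inter_eq]
        exact mem_union_left _ (mem_union_right _ he)
      rw [← h] at heP1
      exact (eq_empty_iff_forall_notMem.mp hWfree e) (mem_inter.mpr ⟨heP1, heW⟩)
    · rw [eq_empty_iff_forall_notMem]
      intro e he
      obtain ⟨he0, he1⟩ := mem_inter.mp he
      rcases htsub e he1 with h | h
      · exact (eq_empty_iff_forall_notMem.mp hWfree e) (mem_inter.mpr ⟨he0, h⟩)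
      · exact (eq_empty_iff_forall_notMem.mp hYfree e) (mem_inter.mpr ⟨he0, h⟩)
  rcases hcase with ⟨hk3, hab⟩ | ⟨hnA, hnB, hnC⟩ | ⟨hnC, hnF, hnG⟩
  · -- GOOD case : W ∩ Y is a 3-tail, contradicting minimality of W
    have hP1conn : G.ConnSub (W ∩ Y) := by
      rcases hab with h | h
      · exact connSub_inter hWconn ⟨γ0, mem_inter.mpr ⟨hγ0W, hγ0Y⟩⟩ (by omega)
      · have := connSub_inter hYconn ⟨γ0, mem_inter.mpr ⟨hγ0Y, hγ0W⟩⟩ (by omega)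
        rwa [inter_comm] at this
    have hc3P1 : G.cond3 γ0 γ1 (G.chainSet M2 W2) (W ∩ Y) := by
      refine ⟨⟨⟨fun h => hbP1 (h ▸ mem_univ _), hP1conn, hP1cconn⟩, by omega⟩,
        mem_inter.mpr ⟨hγ0W, hγ0Y⟩, mem_inter.mpr ⟨hγ1W, hγ1Y⟩, hbP1, ?_⟩
      rintro T ⟨s, hs, rfl⟩
      show G.Term (W ∩ Y) ∩ G.Term (W2 s) = ∅
      rw [eq_empty_iff_forall_notMem]
      intro e he
      obtain ⟨he1, he2⟩ := mem_inter.mp he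
      rcases htsub e he1 with h | h
      · exact (eq_empty_iff_forall_notMem.mp (hT2W s hs) e) (mem_inter.mpr ⟨h, he2⟩)
      · exact (eq_empty_iff_forall_notMem.mp (hT2Y s hs) e) (mem_inter.mpr ⟨h, he2⟩)
    have hle : W ⊆ W ∩ Y := hW.2 ⟨hc3P1, hP1prec⟩ inter_subset_left
    exact hp2Y (mem_inter.mp (hle hp2W)).2
  · -- HARD case : W ∩ Y is a 2-tail; contradict maximality of the 2-chain
    have hP1conn : G.ConnSub (W ∩ Y) :=
      connSub_inter hWconn ⟨γ0, mem_inter.mpr ⟨hγ0W, hγ0Y⟩⟩ (by omega)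
    have hc2P1 : G.cond2 γ0 γ1 (W ∩ Y) :=
      ⟨⟨⟨fun h => hbP1 (h ▸ mem_univ _), hP1conn, hP1cconn⟩, by omega⟩,
        mem_inter.mpr ⟨hγ0W, hγ0Y⟩, mem_inter.mpr ⟨hγ1W, hγ1Y⟩, hbP1⟩
    refine chain_absurd h2 hc2P1 ?_ ?_
    · intro s hs
      rw [eq_empty_iff_forall_notMem]
      intro e he
      obtain ⟨he1, he2⟩ := mem_inter.mp he
      rcases htsub e he2 with h | h
      · exact (eq_empty_iff_forall_notMem.mp (hT2W s hs) e) (mem_inter.mpr ⟨h, he1⟩)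
      · exact (eq_empty_iff_forall_notMem.mp (hT2Y s hs) e) (mem_inter.mpr ⟨h, he1⟩)
    · intro s hs h
      obtain ⟨e, he⟩ := card_pos.mp hA
      have heY : e ∈ G.Term Y := cA_subset_term W Y he
      have heP1 : e ∈ G.Term (W ∩ Y) := by
        rw [term_inter_eq]
        exact mem_union_left _ (mem_union_left _ he)
      rw [← h] at heP1
      exact (eq_empty_iff_forall_notMem.mp (hT2Y s hs) e) (mem_inter.mpr ⟨heY, heP1⟩)
  · -- HARD case : W ∪ Y is a 2-tail; contradict maximality of the 2-chain
    have hUconn : G.ConnSub (W ∪ Y) := connSub_union hWconn hYconn hγ0W hγ0Y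
    have hUcconn : G.ConnSub (W ∪ Y)ᶜ := by
      rw [compl_union]
      refine connSub_inter hWcconn ⟨G.base, mem_inter.mpr
        ⟨mem_compl.mpr hbW, mem_compl.mpr hbY⟩⟩ ?_
      rw [cA_compl_right]
      omega
    have hbU : G.base ∉ W ∪ Y := by
      rw [mem_union]
      rintro (h | h)
      · exact hbW h
      · exact hbY h
    have husub : ∀ e ∈ G.Term (W ∪ Y), e ∈ G.Term W ∨ e ∈ G.Term Y := by
      intro e he
      exact mem_union.mp (term_union_subset W Y he)
    have hc2U : G.cond2 γ0 γ1 (W ∪ Y) :=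
      ⟨⟨⟨fun h => hbU (h ▸ mem_univ _), hUconn, hUcconn⟩, by omega⟩,
        mem_union_left _ hγ0W, mem_union_left _ hγ1W, hbU⟩
    refine chain_absurd h2 hc2U ?_ ?_
    · intro s hs
      rw [eq_empty_iff_forall_notMem]
      intro e he
      obtain ⟨he1, he2⟩ := mem_inter.mp he
      rcases husub e he2 with h | h
      · exact (eq_empty_iff_forall_notMem.mp (hT2W s hs) e) (mem_inter.mpr ⟨h, he1⟩)
      · exact (eq_empty_iff_forall_notMem.mp (hT2Y s hs) e) (mem_inter.mpr ⟨h, he1⟩)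
    · intro s hs h
      obtain ⟨e, he⟩ := card_pos.mp hF
      have heW : e ∈ G.Term W := cA_subset_term Yᶜ W he
      have heU : e ∈ G.Term (W ∪ Y) := by
        rw [term_union_eq]
        exact mem_union_left _ (mem_union_right _ he)
      rw [← h] at heU
      exact (eq_empty_iff_forall_notMem.mp (hT2W s hs) e) (mem_inter.mpr ⟨heW, heU⟩)

end NodalGraph

/-- Lemma 2.6: every 3-tail `Z ⊇ C_γ ∪ C_{γ'}` with
`σ(0) ∈ Zᶜ` admits a `Z`-terminal tail `W` that either lies in `T²_{γ,γ'}`, or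
lies in `T³_{γ,γ'}` and is contained in `Z`. -/
theorem exists_Zterminal_for_three_tail
    (G : NodalGraph) (hconn : G.Connected) (γ γ' : G.V)
    (M2 : ℕ) (W2 : ℕ → Finset G.V) (h2 : G.IsNested2 γ γ' M2 W2)
    (M3 : ℕ) (W3 : ℕ → Finset G.V)
    (h3 : G.IsNested3 γ γ' (G.chainSet M2 W2) M3 W3)
    (Z : Finset G.V) (hZ : G.IsKTail Z 3) (hγ : γ ∈ Z) (hγ' : γ' ∈ Z)
    (hb : G.base ∈ Zᶜ) :
    ∃ Wt : Finset G.V, (G.Term Wt ∩ G.Term Z).Nonempty ∧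
      (Wt ∈ G.chainSet M2 W2 ∨ (Wt ∈ G.chainSet M3 W3 ∧ Wt ⊆ Z)) := by
  classical
  by_cases hcase : ∃ t, t < M2 ∧ (G.Term (W2 t) ∩ G.Term Z).Nonempty
  · obtain ⟨t, ht, hne⟩ := hcase
    exact ⟨W2 t, hne, Or.inl ⟨t, ht, rfl⟩⟩
  push_neg at hcase
  have hb' : G.base ∉ Z := Finset.mem_compl.mp hb
  have hfreeT2 : ∀ T ∈ G.chainSet M2 W2, G.free Z T := by
    rintro T ⟨t, ht, rfl⟩
    have h := hcase t ht
    show G.Term Z ∩ G.Term (W2 t) = ∅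
    rwa [Finset.inter_comm]
  have hc3Z : G.cond3 γ γ' (G.chainSet M2 W2) Z := ⟨hZ, hγ, hγ', hb', hfreeT2⟩
  have hTermZ : (G.Term Z).Nonempty := by
    refine Finset.card_pos.mp ?_
    have : G.k Z = 3 := hZ.2
    rw [NodalGraph.k] at this
    omega
  have hZne : Z.Nonempty := hZ.1.2.1.1
  suffices H : ∀ n t, t + n = M3 →
      G.prec (if t = 0 then ∅ else W3 (t - 1)) Z →
      ∃ Wt : Finset G.V, (G.Term Wt ∩ G.Term Z).Nonempty ∧
        (Wt ∈ G.chainSet M2 W2 ∨ (Wt ∈ G.chainSet M3 W3 ∧ Wt ⊆ Z)) by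
    refine H M3 0 (by omega) ?_
    refine ⟨by simpa using Finset.empty_ssubset.mpr hZne, ?_⟩
    simp [NodalGraph.term_empty]
  intro n
  induction n with
  | zero =>
      intro t ht hprec
      have : t = M3 := by omega
      subst this
      exact absurd ⟨Z, hc3Z, hprec⟩ h3.2
  | succ n ih =>
      intro t ht hprec
      have ht3 : t < M3 := by omega
      have hmin := h3.1 t ht3
      rcases NodalGraph.master3 h2 hmin hc3Z hprec with hsub | hsub
      · by_cases hterm : (G.Term (W3 t) ∩ G.Term Z).Nonempty
        · exact ⟨W3 t, hterm, Or.inr ⟨⟨t, ht3, rfl⟩, hsub⟩⟩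
        · by_cases heq : W3 t = Z
          · refine ⟨W3 t, ?_, Or.inr ⟨⟨t, ht3, rfl⟩, hsub⟩⟩
            rw [heq, Finset.inter_self]
            exact hTermZ
          · refine ih (t + 1) (by omega) ?_
            have hp : G.prec (W3 t) Z :=
              ⟨lt_of_le_of_ne hsub heq, Finset.not_nonempty_iff_eq_empty.mp hterm⟩
            simpa only [Nat.succ_ne_zero, if_false, Nat.add_sub_cancel] using hp
      · have hle : W3 t ⊆ Z := hmin.2 ⟨hc3Z, hprec⟩ hsub
        refine ⟨W3 t, ?_, Or.inr ⟨⟨t, ht3, rfl⟩, hle⟩⟩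
        rw [subset_antisymm hle hsub, Finset.inter_self]
        exact hTermZ
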